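/- Let F be a super-operator on ℂ^d and n a positive integer. Then the termination set X_n = { |ψ⟩ ∈ ℂ^d : F^n(|ψ⟩⟨ψ|) = 0 } is a linear subspace of ℂ^d; that is, if |φ⟩, |χ⟩ ∈ X_n and α, β ∈ ℂ, then α|φ⟩ + β|χ⟩ ∈ X_n. -/

import Mathlib

open Matrix
open scoped ComplexOrder

/-- The super-operator with Kraus operators `F i`, applied to `ρ`:
`F(ρ) = ∑ i, F i * ρ * (F i)ᴴ`. -/
noncomputable def superApply {d n : ℕ} (F : Fin n → Matrix (Fin d) (Fin d) ℂ)
    (ρ : Matrix (Fin d) (Fin d) ℂ) : Matrix (Fin d) (Fin d) ℂ :=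
  ∑ i, F i * ρ * (F i)ᴴ

section aux

variable {d n : ℕ} (F : Fin n → Matrix (Fin d) (Fin d) ℂ)

lemma superApply_add (A B : Matrix (Fin d) (Fin d) ℂ) :
    superApply F (A + B) = superApply F A + superApply F B := by
  simp [superApply, mul_add, add_mul, Finset.sum_add_distrib]

lemma superApply_smul (c : ℂ) (A : Matrix (Fin d) (Fin d) ℂ) :
    superApply F (c • A) = c • superApply F A := by
  simp [superApply, Finset.smul_sum, mul_smul_comm, smul_mul_assoc]

lemma superApply_zero : superApply F 0 = 0 := by
  simp [superApply]

lemma superApply_sum {ι : Type*} (s : Finset ι) (f : ι → Matrix (Fin d) (Fin d) ℂ) :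
    superApply F (∑ j ∈ s, f j) = ∑ j ∈ s, superApply F (f j) := by
  classical
  induction s using Finset.induction with
  | empty => simp [superApply_zero]
  | insert a s h ih => simp [Finset.sum_insert h, superApply_add, ih]

lemma iter_add (N : ℕ) (A B : Matrix (Fin d) (Fin d) ℂ) :
    (superApply F)^[N] (A + B) = (superApply F)^[N] A + (superApply F)^[N] B := by
  induction N generalizing A B with
  | zero => simp
  | succ N ih => simp [Function.iterate_succ_apply, superApply_add, ih]

lemma iter_smul (N : ℕ) (c : ℂ) (A : Matrix (Fin d) (Fin d) ℂ) :
    (superApply F)^[N] (c • A) = c • (superApply F)^[N] A := by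
  induction N generalizing A with
  | zero => simp
  | succ N ih => simp [Function.iterate_succ_apply, superApply_smul, ih]

lemma iter_sum {ι : Type*} (N : ℕ) (s : Finset ι) (f : ι → Matrix (Fin d) (Fin d) ℂ) :
    (superApply F)^[N] (∑ j ∈ s, f j) = ∑ j ∈ s, (superApply F)^[N] (f j) := by
  induction N generalizing f with
  | zero => simp
  | succ N ih => simp [Function.iterate_succ_apply, superApply_sum, ih]

lemma superApply_posSemidef {A : Matrix (Fin d) (Fin d) ℂ} (hA : A.PosSemidef) :
    (superApply F A).PosSemidef := by
  classical
  unfold superApply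
  refine Finset.sum_induction _ _ (fun a b ha hb => ha.add hb) Matrix.PosSemidef.zero ?_
  intro i _
  exact hA.mul_mul_conjTranspose_same (F i)

lemma iter_posSemidef (N : ℕ) {A : Matrix (Fin d) (Fin d) ℂ} (hA : A.PosSemidef) :
    ((superApply F)^[N] A).PosSemidef := by
  induction N generalizing A with
  | zero => simpa
  | succ N ih => exact ih (superApply_posSemidef F hA)

lemma vecMulVec_star_self_posSemidef (v : Fin d → ℂ) :
    (vecMulVec v (star v)).PosSemidef := by
  exact posSemidef_vecMulVec_self_star v

/-- Sum of PSD matrices equal to zero forces each summand to vanish. -/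
lemma sum_psd_eq_zero {ι : Type*} {s : Finset ι} {M : ι → Matrix (Fin d) (Fin d) ℂ}
    (hpsd : ∀ i ∈ s, (M i).PosSemidef) (hsum : ∑ i ∈ s, M i = 0) :
    ∀ i ∈ s, M i = 0 := by
  classical
  intro i hi
  have hquad : ∀ x : Fin d → ℂ, star x ⬝ᵥ (M i) *ᵥ x = 0 := by
    intro x
    have hall : ∀ j ∈ s, (0 : ℂ) ≤ star x ⬝ᵥ (M j) *ᵥ x := fun j hj => (hpsd j hj).dotProduct_mulVec_nonneg x
    have hszero : ∑ j ∈ s, star x ⬝ᵥ (M j) *ᵥ x = 0 := by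
      have key : ∀ t : Finset ι, star x ⬝ᵥ (∑ j ∈ t, M j) *ᵥ x =
          ∑ j ∈ t, star x ⬝ᵥ (M j) *ᵥ x := by
        intro t
        induction t using Finset.induction with
        | empty => simp
        | insert a s h ih => simp [Finset.sum_insert h, add_mulVec, dotProduct_add, ih]
      rw [← key, hsum]
      simp
    exact (Finset.sum_eq_zero_iff_of_nonneg hall).mp hszero i hi
  have hmv : ∀ x : Fin d → ℂ, (M i) *ᵥ x = 0 := fun x =>
    ((hpsd i hi).dotProduct_mulVec_zero_iff x).mp (hquad x)
  ext a b
  have := congrFun (hmv (Pi.single b 1)) a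
  simpa [mulVec_single] using this

lemma mul_vecMulVec_mul (M : Matrix (Fin d) (Fin d) ℂ) (a b : Fin d → ℂ) :
    M * vecMulVec a (star b) * Mᴴ = vecMulVec (M *ᵥ a) (star (M *ᵥ b)) := by
  ext i j
  simp only [mul_apply, vecMulVec_apply, conjTranspose_apply, mulVec, dotProduct,
    Pi.star_apply, Finset.sum_mul, Finset.mul_sum, star_sum, star_mul', RCLike.star_def]
  exact Finset.sum_congr rfl fun k _ => Finset.sum_congr rfl fun l _ => by ring

lemma superApply_vecMulVec (a b : Fin d → ℂ) :
    superApply F (vecMulVec a (star b)) =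
      ∑ i, vecMulVec (F i *ᵥ a) (star (F i *ᵥ b)) := by
  unfold superApply
  exact Finset.sum_congr rfl fun i _ => mul_vecMulVec_mul (F i) a b

lemma key (N : ℕ) : ∀ a b : Fin d → ℂ,
    (superApply F)^[N] (vecMulVec a (star a)) = 0 →
    (superApply F)^[N] (vecMulVec b (star b)) = 0 →
    (superApply F)^[N] (vecMulVec a (star b)) = 0 := by
  induction N with
  | zero =>
    intro a b ha _
    simp only [Function.iterate_zero, id_eq] at ha ⊢
    have haz : a = 0 := by
      funext i
      have := congrFun (congrFun ha i) i
      simp only [vecMulVec_apply, Pi.star_apply, Matrix.zero_apply] at this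
      rcases mul_eq_zero.mp this with h | h
      · exact h
      · simpa using h
    subst haz
    ext i j
    simp [vecMulVec_apply]
  | succ N ih =>
    intro a b ha hb
    rw [Function.iterate_succ_apply, superApply_vecMulVec, iter_sum] at ha hb ⊢
    have hterm : ∀ v : Fin d → ℂ,
        (∑ i, (superApply F)^[N] (vecMulVec (F i *ᵥ v) (star (F i *ᵥ v)))) = 0 →
        ∀ i, (superApply F)^[N] (vecMulVec (F i *ᵥ v) (star (F i *ᵥ v))) = 0 := by
      intro v hv i
      exact sum_psd_eq_zero
        (fun j _ => iter_posSemidef F N (vecMulVec_star_self_posSemidef _)) hv i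
        (Finset.mem_univ i)
    refine Finset.sum_eq_zero fun i _ => ?_
    exact ih _ _ (hterm a ha i) (hterm b hb i)

end aux

/-- The termination set `X_N` is closed under linear combinations, i.e. it is a
linear subspace of `ℂ^d`.  Here `vecMulVec ψ (star ψ)` is the rank-one matrix
`|ψ⟩⟨ψ|`. -/
theorem termination_set_subspace {d n : ℕ}
    (F : Fin n → Matrix (Fin d) (Fin d) ℂ)
    (hF : (1 - ∑ i, (F i)ᴴ * F i).PosSemidef)
    (N : ℕ) (hN : 0 < N)
    (φ χ : Fin d → ℂ) (α β : ℂ)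
    (hφ : (superApply F)^[N] (Matrix.vecMulVec φ (star φ)) = 0)
    (hχ : (superApply F)^[N] (Matrix.vecMulVec χ (star χ)) = 0) :
    (superApply F)^[N]
      (Matrix.vecMulVec (α • φ + β • χ) (star (α • φ + β • χ))) = 0 := by
  have hexp : Matrix.vecMulVec (α • φ + β • χ) (star (α • φ + β • χ)) =
      (α * star α) • vecMulVec φ (star φ) + (α * star β) • vecMulVec φ (star χ) +
      ((β * star α) • vecMulVec χ (star φ) + (β * star β) • vecMulVec χ (star χ)) := by
    ext i j
    simp only [vecMulVec_apply, Pi.add_apply, Pi.smul_apply, Pi.star_apply, star_add,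
      Matrix.add_apply, Matrix.smul_apply, smul_eq_mul, star_smul, RCLike.star_def]
    ring
  rw [hexp, iter_add, iter_add, iter_add, iter_smul, iter_smul, iter_smul, iter_smul,
    hφ, hχ, key F N φ χ hφ hχ, key F N χ φ hχ hφ]
  simp
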